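/- Let W : X → P(Y) be a channel on finite alphabets with pairwise distinct rows: W(δ_x) ≠ W(δ_{x'}) whenever x ≠ x'. If J ≥ |X|·(|Y|−1), then the map p ↦ Σ_x p(x) (W(δ_x))^{⊗J} from probability distributions on X to probability distributions on Y^J is injective. -/

import Mathlib

open Polynomial

lemma aux_prod_ite_pow {J k : ℕ} (hk : k ≤ J) (t : ℝ) :
    (∏ j : Fin J, if (j : ℕ) < k then t else 1) = t ^ k := by
  rw [Fin.prod_univ_eq_prod_range (fun i => if i < k then t else 1) J,
    ← Finset.prod_filter]
  have : (Finset.range J).filter (fun i => i < k) = Finset.range k := by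
    ext i; simp; omega
  rw [this, Finset.prod_const, Finset.card_range]

lemma aux_vandermonde {ι : Type} [Fintype ι] (t r : ι → ℝ) (ht : Function.Injective t)
    (J : ℕ) (hcard : Fintype.card ι ≤ J + 1)
    (h : ∀ k ≤ J, ∑ x, r x * t x ^ k = 0) : r = 0 := by
  classical
  funext x0
  set L : ℝ[X] := ∏ x ∈ Finset.univ.erase x0, (X - C (t x)) with hL
  have hdeg : L.natDegree < J + 1 := by
    have h1 : L.natDegree ≤ ∑ x ∈ Finset.univ.erase x0, (X - C (t x)).natDegree :=
      Polynomial.natDegree_prod_le _ _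
    have h2 : ∑ x ∈ Finset.univ.erase x0, (X - C (t x)).natDegree
        = (Finset.univ.erase x0).card := by
      simp [Polynomial.natDegree_X_sub_C]
    have h3 : (Finset.univ.erase x0).card ≤ Fintype.card ι := by
      simpa using Finset.card_erase_le (s := (Finset.univ : Finset ι)) (a := x0)
    have h4 : (Finset.univ.erase x0).card = Fintype.card ι - 1 := by
      rw [Finset.card_erase_of_mem (Finset.mem_univ x0), Finset.card_univ]
    omega
  have key : ∑ x, r x * L.eval (t x) = 0 := by
    have heval : ∀ x, L.eval (t x) = ∑ i ∈ Finset.range (J + 1), L.coeff i * t x ^ i :=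
      fun x => Polynomial.eval_eq_sum_range' hdeg (t x)
    calc ∑ x, r x * L.eval (t x)
        = ∑ x, ∑ i ∈ Finset.range (J + 1), L.coeff i * (r x * t x ^ i) := by
          refine Finset.sum_congr rfl fun x _ => ?_
          rw [heval, Finset.mul_sum]; exact Finset.sum_congr rfl fun i _ => by ring
      _ = ∑ i ∈ Finset.range (J + 1), L.coeff i * ∑ x, r x * t x ^ i := by
          rw [Finset.sum_comm]
          exact Finset.sum_congr rfl fun i _ => by rw [Finset.mul_sum]
      _ = 0 := by
          refine Finset.sum_eq_zero fun i hi => ?_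
          rw [h i (by simpa using Nat.lt_succ_iff.mp (Finset.mem_range.mp hi)), mul_zero]
  have hzero : ∀ x ∈ Finset.univ, x ≠ x0 → r x * L.eval (t x) = 0 := by
    intro x _ hx
    have : L.eval (t x) = 0 := by
      rw [hL, Polynomial.eval_prod]
      exact Finset.prod_eq_zero (Finset.mem_erase.mpr ⟨hx, Finset.mem_univ x⟩)
        (by simp)
    rw [this, mul_zero]
  have hsingle : ∑ x, r x * L.eval (t x) = r x0 * L.eval (t x0) :=
    Finset.sum_eq_single x0 hzero (by simp)
  have hne : L.eval (t x0) ≠ 0 := by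
    rw [hL, Polynomial.eval_prod]
    refine Finset.prod_ne_zero_iff.mpr fun x hx => ?_
    simp only [Polynomial.eval_sub, Polynomial.eval_X, Polynomial.eval_C]
    exact sub_ne_zero.mpr fun he => (Finset.mem_erase.mp hx).1 (ht he.symm)
  have := hsingle ▸ key
  exact (mul_eq_zero.mp this).resolve_right hne

lemma aux_exists_inj {ι Y : Type} [Fintype ι] [Fintype Y] (W : ι → Y → ℝ)
    (hdist : ∀ x x' : ι, x ≠ x' → W x ≠ W x') :
    ∃ u : Y → ℝ, Function.Injective (fun x => ∑ y, W x y * u y) := by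
  classical
  set e : Y → ℕ := fun y => ((Fintype.equivFin Y) y : ℕ) with he
  have einj : Function.Injective e := fun a b hab => by
    have := Fin.val_injective hab
    exact (Fintype.equivFin Y).injective this
  set P : ι → ℝ[X] := fun x => ∑ y, Polynomial.C (W x y) * Polynomial.X ^ (e y) with hP
  have hcoeff : ∀ x y, (P x).coeff (e y) = W x y := by
    intro x y
    rw [hP]
    simp only [Polynomial.finset_sum_coeff, Polynomial.coeff_C_mul,
      Polynomial.coeff_X_pow]
    rw [Finset.sum_eq_single y (fun y' _ hy' => by
      rw [if_neg (fun hh => hy' (einj hh.symm)), mul_zero]) (by simp)]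
    simp
  have hPne : ∀ x x' : ι, x ≠ x' → P x ≠ P x' := by
    intro x x' hxx' hPP
    exact hdist x x' hxx' (funext fun y => by rw [← hcoeff x y, ← hcoeff x' y, hPP])
  set B : Finset ℝ := Finset.univ.biUnion
    (fun xp : ι × ι => if xp.1 = xp.2 then ∅ else (P xp.1 - P xp.2).roots.toFinset) with hB
  obtain ⟨t, ht⟩ := Infinite.exists_notMem_finset B
  refine ⟨fun y => t ^ e y, fun x x' hxx' => ?_⟩
  by_contra hne
  have hevalP : ∀ x, (P x).eval t = ∑ y, W x y * t ^ e y := by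
    intro x; rw [hP]; simp [Polynomial.eval_finset_sum]
  have heq : (P x - P x').eval t = 0 := by
    simp only [Polynomial.eval_sub]
    rw [hevalP, hevalP]
    rw [sub_eq_zero]; exact hxx'
  have hne0 : P x - P x' ≠ 0 := sub_ne_zero.mpr (hPne x x' hne)
  have : t ∈ B := by
    rw [hB]
    refine Finset.mem_biUnion.mpr ⟨(x, x'), Finset.mem_univ _, ?_⟩
    rw [if_neg hne]
    exact Multiset.mem_toFinset.mpr ((Polynomial.mem_roots hne0).mpr heq)
  exact ht this


/-- If a channel `W : X → P(Y)` has pairwise distinct rows and `J ≥ |X|·(|Y|−1)`, then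
`p ↦ Σ_x p(x) (W(δ_x))^{⊗J}` is injective on probability distributions on `X`. -/
theorem stmt_11 (X Y : Type) [Fintype X] [Fintype Y]
    (W : X → Y → ℝ) (hWpos : ∀ x y, 0 ≤ W x y) (hWsum : ∀ x, ∑ y, W x y = 1)
    (hdist : ∀ x x' : X, x ≠ x' → W x ≠ W x')
    (J : ℕ) (hJ : Fintype.card X * (Fintype.card Y - 1) ≤ J)
    (p q : X → ℝ)
    (hp0 : ∀ x, 0 ≤ p x) (hp1 : ∑ x, p x = 1)
    (hq0 : ∀ x, 0 ≤ q x) (hq1 : ∑ x, q x = 1)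
    (h : (fun yJ : Fin J → Y => ∑ x, p x * ∏ j, W x (yJ j))
       = (fun yJ : Fin J → Y => ∑ x, q x * ∏ j, W x (yJ j))) :
    p = q := by
  classical
  set r : X → ℝ := fun x => p x - q x with hr
  have hpt : ∀ f : Fin J → Y, ∑ x, r x * ∏ j, W x (f j) = 0 := by
    intro f
    have := congrFun h f
    simp only [hr, sub_mul, Finset.sum_sub_distrib]
    rw [this]; ring
  obtain ⟨u, hu⟩ := aux_exists_inj W hdist
  set t : X → ℝ := fun x => ∑ y, W x y * u y with htdef
  -- main moment identity
  have hmom : ∀ k ≤ J, ∑ x, r x * t x ^ k = 0 := by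
    intro k hk
    set g : Fin J → Y → ℝ := fun j y => if (j : ℕ) < k then u y else 1 with hg
    have hrow : ∀ x (j : Fin J), ∑ y, W x y * g j y = if (j : ℕ) < k then t x else 1 := by
      intro x j
      rw [hg]
      by_cases hj : (j : ℕ) < k
      · simp only [if_pos hj]; rfl
      · simp only [if_neg hj, mul_one]
        exact hWsum x
    have hprod : ∀ x, (∏ j, ∑ y, W x y * g j y) = t x ^ k := by
      intro x
      rw [← aux_prod_ite_pow hk (t x)]
      exact Finset.prod_congr rfl fun j _ => hrow x j
    have hexp : ∑ x, r x * ∏ j, ∑ y, W x y * g j y = 0 := by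
      have step1 : ∀ x : X, (∏ j, ∑ y, W x y * g j y)
          = ∑ f : Fin J → Y, (∏ j, W x (f j)) * ∏ j, g j (f j) := by
        intro x
        rw [Fintype.prod_sum (fun j y => W x y * g j y)]
        exact Finset.sum_congr rfl fun f _ => by rw [Finset.prod_mul_distrib]
      calc ∑ x, r x * ∏ j, ∑ y, W x y * g j y
          = ∑ x, ∑ f : Fin J → Y, (∏ j, g j (f j)) * (r x * ∏ j, W x (f j)) := by
            refine Finset.sum_congr rfl fun x _ => ?_
            rw [step1 x, Finset.mul_sum]
            exact Finset.sum_congr rfl fun f _ => by ring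
        _ = ∑ f : Fin J → Y, (∏ j, g j (f j)) * ∑ x, r x * ∏ j, W x (f j) := by
            rw [Finset.sum_comm]
            exact Finset.sum_congr rfl fun f _ => by rw [Finset.mul_sum]
        _ = 0 := Finset.sum_eq_zero fun f _ => by rw [hpt f, mul_zero]
    calc ∑ x, r x * t x ^ k = ∑ x, r x * ∏ j, ∑ y, W x y * g j y :=
          Finset.sum_congr rfl fun x _ => by rw [hprod x]
      _ = 0 := hexp
  -- cardinality bound
  have hcard : Fintype.card X ≤ J + 1 := by
    by_cases hY : 2 ≤ Fintype.card Y
    · have : Fintype.card X ≤ Fintype.card X * (Fintype.card Y - 1) :=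
        Nat.le_mul_of_pos_right _ (by omega)
      omega
    · -- card Y ≤ 1; show card X ≤ 1
      have hX1 : Fintype.card X ≤ 1 := by
        by_contra hX
        have : Nontrivial X := Fintype.one_lt_card_iff_nontrivial.mp (by omega)
        obtain ⟨x, x', hxx'⟩ := this.exists_pair_ne
        have hYsub : ∀ a b : Y, a = b := Fintype.card_le_one_iff.mp (by omega)
        refine hdist x x' hxx' (funext fun y => ?_)
        have huniv : (Finset.univ : Finset Y) = {y} :=
          Finset.eq_singleton_iff_unique_mem.mpr ⟨Finset.mem_univ y,
            fun z _ => hYsub z y⟩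
        have h1 : W x y = 1 := by rw [← hWsum x, huniv, Finset.sum_singleton]
        have h2 : W x' y = 1 := by rw [← hWsum x', huniv, Finset.sum_singleton]
        rw [h1, h2]
      omega
  have hr0 : r = 0 := aux_vandermonde t r hu J hcard hmom
  funext x
  have := congrFun hr0 x
  simp only [hr, Pi.zero_apply] at this
  linarith
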